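/- Let R be a PVMD and I a t-invertible ideal of R. Then (I·T(I))_{t₁} = T(I), where t₁ is the t-operation of the Nagata transform T(I). -/

import Mathlib

/-!
Common definitions: star operations (`v`- and `t`-closure), `t`-ideals, `t`-invertibility,
PVMDs, overrings, `t`-linked and `t`-flat overrings, localizations inside the quotient
field, Nagata and Kaplansky transforms, endomorphism rings of ideals.
-/

open scoped Classical

namespace PVMDPaper

noncomputable section

section Generic

variable (A : Type*) [CommRing A] (K : Type*) [Field K] [Algebra A K]

/-- The image of an integral ideal of `A` inside the field `K`, as an `A`-submodule of `K`. -/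
def toK (I : Ideal A) : Submodule A K := Submodule.map (Algebra.linearMap A K) I

variable {A K}

/-- The dual `I⁻¹ = (A : I) = {x ∈ K : x I ⊆ A}` of a submodule of `K`. -/
def dual (I : Submodule A K) : Submodule A K := 1 / I

/-- The `v`-closure `I_v = (I⁻¹)⁻¹`. -/
def vOp (I : Submodule A K) : Submodule A K := 1 / (1 / I)

/-- The `t`-closure `I_t`: the union of `J_v` where `J` ranges over the nonzero finitely
generated submodules `J ≤ I` (the union of this directed family is its supremum). -/
def tOp (I : Submodule A K) : Submodule A K :=
  sSup {V | ∃ J : Submodule A K, J ≠ ⊥ ∧ J.FG ∧ J ≤ I ∧ V = vOp J}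

variable (K)

/-- An (integral) ideal `I` of `A` is a `t`-ideal if `I = I_t`. -/
def IsTIdeal (I : Ideal A) : Prop := tOp (toK A K I) = toK A K I

/-- An ideal `I` is `t`-invertible if `(I I⁻¹)_t = A`. -/
def IsTInvertible (I : Ideal A) : Prop := tOp (toK A K I * dual (toK A K I)) = 1

/-- A `t`-maximal ideal: an ideal maximal in the set of proper integral `t`-ideals. -/
def IsTMaximal (M : Ideal A) : Prop :=
  M ≠ ⊤ ∧ IsTIdeal K M ∧ ∀ J : Ideal A, J ≠ ⊤ → IsTIdeal K J → M ≤ J → J = M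

variable (A)

/-- `A` is a Prüfer `v`-multiplication domain: every nonzero finitely generated ideal
is `t`-invertible. -/
def IsPVMD : Prop := ∀ I : Ideal A, I ≠ ⊥ → I.FG → IsTInvertible K I

/-- `Spec_t(A)` is Noetherian: the ascending chain condition on radical `t`-ideals. -/
def TSpecNoetherian : Prop :=
  ∀ f : ℕ →o Ideal A, (∀ n, IsTIdeal K (f n) ∧ (f n).radical = f n) →
    ∃ n, ∀ m, n ≤ m → f m = f n

variable {A K}

/-- A submodule of `K` is a subring of `K` iff it contains `1` and is closed under
multiplication (being an additive subgroup already). -/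
def IsSubringOf (S : Submodule A K) : Prop :=
  (1 : K) ∈ S ∧ ∀ x ∈ S, ∀ y ∈ S, x * y ∈ S

variable (K)

/-- The localization `A_P = {a/s : a ∈ A, s ∈ A ∖ P}` viewed as a subset of `K`. -/
def loc (P : Ideal A) : Set K :=
  {x | ∃ a s : A, s ∉ P ∧ x * algebraMap A K s = algebraMap A K a}

/-- The set `J A_P = {a/s : a ∈ J, s ∈ A ∖ P} ⊆ K`. -/
def locIdealAt (J P : Ideal A) : Set K :=
  {x | ∃ a ∈ J, ∃ s : A, s ∉ P ∧ x * algebraMap A K s = algebraMap A K a}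

/-- `Z(A, I)`: the set of zero divisors on `A/I`. -/
def ZSet (I : Ideal A) : Set A := {x | ∃ a : A, a ∉ I ∧ x * a ∈ I}

/-- `Q` is a maximal prime ideal of `Z(A,I)`: a prime contained in `Z(A,I)`, maximal
(under inclusion) among the primes contained in `Z(A,I)`. -/
def MaxPrimeOfZ (I Q : Ideal A) : Prop :=
  Q.IsPrime ∧ (Q : Set A) ⊆ ZSet I ∧
    ∀ Q' : Ideal A, Q'.IsPrime → (Q' : Set A) ⊆ ZSet I → Q ≤ Q' → Q' = Q

end Generic

section Overring

variable {R : Type*} [CommRing R] [IsDomain R]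
variable {K : Type*} [Field K] [Algebra R K] [IsFractionRing R K]

/-- The extension `IT` of an ideal `I` of `R` to an overring `T`, as a `T`-submodule of `K`. -/
def extendI (I : Ideal R) (T : Subalgebra R K) : Submodule T K :=
  Submodule.span T (algebraMap R K '' (I : Set R))

/-- The extension `IT` of an `R`-submodule `I` of `K` to an overring `T`. -/
def extendS (I : Submodule R K) (T : Subalgebra R K) : Submodule T K :=
  Submodule.span T (I : Set K)

/-- An overring `T` of `R` is `t`-linked over `R` if `(IT)⁻¹ = T` for each finitely
generated ideal `I` of `R` with `I⁻¹ = R`. -/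
def IsTLinked (T : Subalgebra R K) : Prop :=
  ∀ I : Ideal R, I.FG → dual (toK R K I) = 1 → dual (extendI I T) = 1

/-- An overring `T` of `R` is `t`-flat over `R` if `T_M = R_{M ∩ R}` for each
`t`-maximal ideal `M` of `T`. -/
def IsTFlat (T : Subalgebra R K) : Prop :=
  ∀ M : Ideal T, IsTMaximal K M → loc K M = loc K (M.comap (algebraMap R T))

variable (R K)

/-- `R` is a `tQR`-domain: a PVMD all of whose `t`-linked overrings are localizations
of `R` at multiplicative sets. -/
def IsTQR : Prop :=
  IsPVMD R K ∧ ∀ T : Subalgebra R K, IsTLinked T → ∃ S : Submonoid R,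
    (T : Set K) = {x | ∃ a : R, ∃ s ∈ S, x * algebraMap R K s = algebraMap R K a}

variable {R K}
variable (K)

/-- The endomorphism ring `(I : I) = {x ∈ K : x I ⊆ I}` of an ideal `I`, as an
overring of `R`. -/
def endoRing (I : Ideal R) : Subalgebra R K where
  carrier := {x : K | ∀ y ∈ toK R K I, x * y ∈ toK R K I}
  mul_mem' := by
    intro a b ha hb y hy
    rw [mul_assoc]
    exact ha _ (hb _ hy)
  one_mem' := by
    intro y hy
    rwa [one_mul]
  add_mem' := by
    intro a b ha hb y hy
    rw [add_mul]
    exact Submodule.add_mem _ (ha y hy) (hb y hy)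
  zero_mem' := by
    intro y hy
    rw [zero_mul]
    exact Submodule.zero_mem _
  algebraMap_mem' := by
    intro r y hy
    rw [← Algebra.smul_def]
    exact Submodule.smul_mem _ r hy

set_option synthInstance.maxHeartbeats 400000 in
/-- The ideal `I`, viewed as an ideal of its endomorphism ring `(I : I)`. -/
def idealInEndo (I : Ideal R) : Ideal (endoRing K I) where
  carrier := {x | (x : K) ∈ toK R K I}
  add_mem' := by
    intro a b ha hb
    simp only [Set.mem_setOf_eq] at *
    rw [AddMemClass.coe_add]
    exact Submodule.add_mem _ ha hb
  zero_mem' := by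
    simp only [Set.mem_setOf_eq, ZeroMemClass.coe_zero]
    exact Submodule.zero_mem _
  smul_mem' := by
    intro c x hx
    simp only [Set.mem_setOf_eq] at *
    rw [smul_eq_mul, MulMemClass.coe_mul]
    exact c.2 _ hx

/-- The Kaplansky transform `Ω(I) = {u ∈ K : ∀ a ∈ I, ∃ n ≥ 1, u aⁿ ∈ R}`, as an
overring of `R`. -/
def kaplansky (I : Ideal R) : Subalgebra R K where
  carrier := {u : K | ∀ a ∈ I, ∃ n : ℕ, 0 < n ∧
    ∃ r : R, u * (algebraMap R K a) ^ n = algebraMap R K r}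
  mul_mem' := by
    intro u v hu hv a ha
    obtain ⟨n, hn, r, hr⟩ := hu a ha
    obtain ⟨m, hm, s, hs⟩ := hv a ha
    refine ⟨n + m, by omega, r * s, ?_⟩
    rw [map_mul, ← hr, ← hs, pow_add]
    ring
  one_mem' := by
    intro a ha
    exact ⟨1, one_pos, a, by rw [pow_one, one_mul]⟩
  add_mem' := by
    intro u v hu hv a ha
    obtain ⟨n, hn, r, hr⟩ := hu a ha
    obtain ⟨m, hm, s, hs⟩ := hv a ha
    refine ⟨n + m, by omega, r * a ^ m + s * a ^ n, ?_⟩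
    rw [map_add, map_mul, map_mul, map_pow, map_pow, ← hr, ← hs, pow_add, add_mul]
    ring
  zero_mem' := by
    intro a ha
    exact ⟨1, one_pos, 0, by rw [map_zero, zero_mul]⟩
  algebraMap_mem' := by
    intro r a ha
    exact ⟨1, one_pos, r * a, by rw [map_mul, pow_one]⟩

/-- The Nagata (ideal) transform `T(I) = ⋃_{n ≥ 1} (R : Iⁿ)`, as an overring of `R`. -/
def nagata (I : Ideal R) : Subalgebra R K where
  carrier := {x : K | ∃ n : ℕ, ∀ y ∈ I ^ (n + 1),
    ∃ r : R, x * algebraMap R K y = algebraMap R K r}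
  mul_mem' := by
    intro x x' hx hx'
    obtain ⟨n, hn⟩ := hx
    obtain ⟨m, hm⟩ := hx'
    refine ⟨n + m + 1, fun y hy => ?_⟩
    rw [show n + m + 1 + 1 = (n + 1) + (m + 1) by omega, pow_add] at hy
    refine Submodule.mul_induction_on hy ?_ ?_
    · intro a ha b hb
      obtain ⟨r, hr⟩ := hn a ha
      obtain ⟨s, hs⟩ := hm b hb
      refine ⟨r * s, ?_⟩
      rw [map_mul, map_mul, ← hr, ← hs]
      ring
    · rintro y1 y2 ⟨r1, h1⟩ ⟨r2, h2⟩
      exact ⟨r1 + r2, by rw [map_add, map_add, mul_add, h1, h2]⟩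
  one_mem' := ⟨0, fun y _ => ⟨y, by rw [one_mul]⟩⟩
  add_mem' := by
    intro x x' hx hx'
    obtain ⟨n, hn⟩ := hx
    obtain ⟨m, hm⟩ := hx'
    refine ⟨n + m + 1, fun y hy => ?_⟩
    have h1 : y ∈ I ^ (n + 1) := Ideal.pow_le_pow_right (by omega) hy
    have h2 : y ∈ I ^ (m + 1) := Ideal.pow_le_pow_right (by omega) hy
    obtain ⟨r, hr⟩ := hn y h1
    obtain ⟨s, hs⟩ := hm y h2
    exact ⟨r + s, by rw [map_add, add_mul, hr, hs]⟩
  zero_mem' := ⟨0, fun y _ => ⟨0, by rw [map_zero, zero_mul]⟩⟩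
  algebraMap_mem' := by
    intro r
    exact ⟨0, fun y _ => ⟨r * y, by rw [map_mul]⟩⟩

end Overring

section Statements

variable {R : Type*} [CommRing R] [IsDomain R]
variable {K : Type*} [Field K] [Algebra R K] [IsFractionRing R K]

section Helpers

variable {A : Type*} [CommRing A] {K : Type*} [Field K] [Algebra A K]

lemma aux_one_div_le_one_div {M N : Submodule A K} (h : M ≤ N) : 1 / N ≤ 1 / M := fun x hx =>
  Submodule.mem_div_iff_forall_mul_mem.mpr fun y hy =>
    Submodule.mem_div_iff_forall_mul_mem.mp hx y (h hy)

lemma aux_mul_mem_one {x y : K} (hx : x ∈ (1 : Submodule A K)) (hy : y ∈ (1 : Submodule A K)) :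
    x * y ∈ (1 : Submodule A K) := by
  have := Submodule.mul_mem_mul hx hy
  rwa [one_mul] at this

lemma aux_vOp_mono {M N : Submodule A K} (h : M ≤ N) : vOp M ≤ vOp N :=
  aux_one_div_le_one_div (aux_one_div_le_one_div h)

lemma aux_vOp_le_one {M : Submodule A K} (h : M ≤ 1) : vOp M ≤ 1 := by
  intro x hx
  have h1 : (1 : K) ∈ 1 / M := Submodule.mem_div_iff_forall_mul_mem.mpr fun y hy => by
    rw [one_mul]; exact h hy
  have := Submodule.mem_div_iff_forall_mul_mem.mp hx 1 h1
  rwa [mul_one] at this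

lemma aux_one_le_vOp {M : Submodule A K} (h : 1 / M ≤ 1) : 1 ≤ vOp M := fun x hx =>
  Submodule.mem_div_iff_forall_mul_mem.mpr fun z hz => aux_mul_mem_one hx (h hz)

end Helpers

section Helpers2

variable {R : Type*} [CommRing R] [IsDomain R]
variable {K : Type*} [Field K] [Algebra R K] [IsFractionRing R K]

lemma aux_mem_one_subalgebra (T : Subalgebra R K) (x : K) :
    x ∈ (1 : Submodule T K) ↔ x ∈ T := by
  rw [Submodule.mem_one]
  constructor
  · rintro ⟨y, rfl⟩
    exact y.2
  · intro hx
    exact ⟨⟨x, hx⟩, rfl⟩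

end Helpers2

/-- Let `R` be a PVMD and `I` a `t`-invertible ideal of `R`. Then
`(I · T(I))_{t₁} = T(I)`, where `t₁` is the `t`-operation of the Nagata transform
`T(I)`. -/

theorem statement_18 (hR : IsPVMD R K) (I : Ideal R) (hbot : I ≠ ⊥)
    (hinv : IsTInvertible K I) :
    tOp (extendI I (nagata K I)) = 1 := by
  classical
  set T : Subalgebra R K := nagata K I with hT
  -- a nonzero element of I
  obtain ⟨a, haI, ha0⟩ := (Submodule.ne_bot_iff I).mp hbot
  have hamap : algebraMap R K a ≠ 0 := fun h => ha0 (IsFractionRing.injective R K (by rwa [map_zero]))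
  have hamem : algebraMap R K a ∈ toK R K I := ⟨a, haI, rfl⟩
  -- Step 1: extract a f.g. J₀ ≤ I·I⁻¹ with 1 ∈ vOp J₀
  have h1mem : (1 : K) ∈ tOp (toK R K I * dual (toK R K I)) := by
    rw [hinv]
    exact Submodule.one_le.mp le_rfl
  have hMle : toK R K I ≤ toK R K I * dual (toK R K I) := by
    intro x hx
    have h1 : (1 : K) ∈ dual (toK R K I) := by
      refine Submodule.mem_div_iff_forall_mul_mem.mpr ?_
      rintro y hy
      obtain ⟨r, -, rfl⟩ := Submodule.mem_map.mp hy
      rw [one_mul]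
      exact Submodule.mem_one.mpr ⟨r, rfl⟩
    have := Submodule.mul_mem_mul hx h1
    rwa [mul_one] at this
  set Sfam : Set (Submodule R K) :=
    {V | ∃ J : Submodule R K, J ≠ ⊥ ∧ J.FG ∧ J ≤ toK R K I * dual (toK R K I) ∧ V = vOp J}
  have hspan_ne : ∀ s : Set K, algebraMap R K a ∈ s → Submodule.span R s ≠ ⊥ := by
    intro s hs h
    exact hamap ((Submodule.mem_bot R).mp (h ▸ Submodule.subset_span hs))
  have hne : Sfam.Nonempty := by
    refine ⟨vOp (Submodule.span R {algebraMap R K a}), Submodule.span R {algebraMap R K a}, ?_, ?_, ?_, rfl⟩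
    · exact hspan_ne _ rfl
    · exact Submodule.fg_span (Set.finite_singleton _)
    · exact (Submodule.span_le.mpr (Set.singleton_subset_iff.mpr hamem)).trans hMle
  have hdir : DirectedOn (· ≤ ·) Sfam := by
    rintro V₁ ⟨J₁, hJ₁b, hJ₁f, hJ₁l, rfl⟩ V₂ ⟨J₂, hJ₂b, hJ₂f, hJ₂l, rfl⟩
    refine ⟨vOp (J₁ ⊔ J₂), ⟨J₁ ⊔ J₂, ?_, hJ₁f.sup hJ₂f, sup_le hJ₁l hJ₂l, rfl⟩,
      aux_vOp_mono le_sup_left, aux_vOp_mono le_sup_right⟩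
    intro h
    exact hJ₁b (le_bot_iff.mp (h ▸ le_sup_left))
  rw [tOp] at h1mem
  obtain ⟨V, hVmem, h1V⟩ := (Submodule.mem_sSup_of_directed hne hdir).mp h1mem
  obtain ⟨J₀, hJ₀b, hJ₀f, hJ₀l, rfl⟩ := hVmem
  -- 1/J₀ ≤ 1
  have hdual : 1 / J₀ ≤ (1 : Submodule R K) := by
    intro z hz
    have := Submodule.mem_div_iff_forall_mul_mem.mp h1V z hz
    rwa [one_mul] at this
  -- Step 2: find a finite set S₀ ⊆ toK I with J₀ ≤ span S₀ * dual (toK I)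
  obtain ⟨s, hs⟩ := hJ₀f
  have hchoice : ∀ x : K, x ∈ (s : Set K) →
      ∃ Tx : Finset K, (Tx : Set K) ⊆ (toK R K I : Set K) ∧
        x ∈ Submodule.span R (Tx : Set K) * dual (toK R K I) := by
    intro x hx
    have hxJ : x ∈ J₀ := hs ▸ Submodule.subset_span hx
    obtain ⟨Tx, Tx', hTx, hTx', hxmem⟩ := Submodule.mem_span_mul_finite_of_mem_mul (hJ₀l hxJ)
    refine ⟨Tx, hTx, ?_⟩
    rw [← Submodule.span_mul_span] at hxmem
    exact mul_le_mul' le_rfl (Submodule.span_le.mpr hTx') hxmem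
  choose! f hf1 hf2 using hchoice
  set S₀ : Finset K := s.biUnion f with hS₀
  set SF : Finset K := insert (algebraMap R K a) S₀ with hSF
  have hSFsub : (SF : Set K) ⊆ (toK R K I : Set K) := by
    intro x hx
    rcases Finset.mem_insert.mp hx with h | h
    · exact h ▸ hamem
    · obtain ⟨y, hy, hxy⟩ := Finset.mem_biUnion.mp h
      exact hf1 y hy hxy
  have hJ₀le : J₀ ≤ Submodule.span R (SF : Set K) * dual (toK R K I) := by
    rw [← hs]
    refine Submodule.span_le.mpr fun x hx => ?_
    refine mul_le_mul' (Submodule.span_mono ?_) le_rfl (hf2 x hx)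
    intro y hy
    exact Finset.mem_insert.mpr (Or.inr (Finset.mem_biUnion.mpr ⟨x, hx, hy⟩))
  -- Step 3: the key claim : (1 : Submodule T K) / span T SF ≤ 1
  have key : (1 : Submodule T K) / Submodule.span T (SF : Set K) ≤ 1 := by
    intro x hx
    rw [aux_mem_one_subalgebra]
    -- x * s ∈ T for each s ∈ SF
    have hxs : ∀ z ∈ SF, x * z ∈ T := by
      intro z hz
      have := Submodule.mem_div_iff_forall_mul_mem.mp hx z (Submodule.subset_span hz)
      rwa [aux_mem_one_subalgebra] at this
    -- choose exponents
    have hexp : ∀ z ∈ SF, ∃ n : ℕ, ∀ y ∈ I ^ (n + 1),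
        ∃ r : R, (x * z) * algebraMap R K y = algebraMap R K r := fun z hz => hxs z hz
    choose! g hg using hexp
    set N : ℕ := SF.sup g with hN
    have hstep1 : ∀ y ∈ I ^ (N + 1), ∀ z ∈ Submodule.span R (SF : Set K),
        x * z * algebraMap R K y ∈ (1 : Submodule R K) := by
      intro y hy z hz
      induction hz using Submodule.span_induction with
      | mem z hzS =>
        have hN' : I ^ (N + 1) ≤ I ^ (g z + 1) :=
          Ideal.pow_le_pow_right (Nat.add_le_add_right (Finset.le_sup hzS) 1)
        obtain ⟨r, hr⟩ := hg z hzS y (hN' hy)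
        exact Submodule.mem_one.mpr ⟨r, hr.symm⟩
      | zero => rw [mul_zero, zero_mul]; exact Submodule.zero_mem _
      | add z w hz hw ihz ihw =>
        rw [mul_add, add_mul]; exact Submodule.add_mem _ ihz ihw
      | smul r z hz ihz =>
        have heq : x * (r • z) * algebraMap R K y = r • (x * z * algebraMap R K y) := by
          rw [Algebra.smul_def, Algebra.smul_def]; ring
        rw [heq]
        exact Submodule.smul_mem _ r ihz
    have hstep2 : ∀ y₁ ∈ I ^ (N + 1), ∀ y₂ ∈ I,
        ∀ w ∈ Submodule.span R (SF : Set K) * dual (toK R K I),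
        x * algebraMap R K y₁ * algebraMap R K y₂ * w ∈ (1 : Submodule R K) := by
      intro y₁ hy₁ y₂ hy₂ w hw
      refine Submodule.mul_induction_on hw (fun z hz d hd => ?_) (fun w₁ w₂ ih₁ ih₂ => ?_)
      · have h1 : x * z * algebraMap R K y₁ ∈ (1 : Submodule R K) := hstep1 y₁ hy₁ z hz
        have h2 : d * algebraMap R K y₂ ∈ (1 : Submodule R K) :=
          Submodule.mem_div_iff_forall_mul_mem.mp hd _ ⟨y₂, hy₂, rfl⟩
        have := aux_mul_mem_one h1 h2
        rwa [show x * z * algebraMap R K y₁ * (d * algebraMap R K y₂)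
          = x * algebraMap R K y₁ * algebraMap R K y₂ * (z * d) by ring] at this
      · rw [mul_add]; exact Submodule.add_mem _ ih₁ ih₂
    have hstep3 : ∀ y₁ ∈ I ^ (N + 1), ∀ y₂ ∈ I,
        x * algebraMap R K y₁ * algebraMap R K y₂ ∈ (1 : Submodule R K) := by
      intro y₁ hy₁ y₂ hy₂
      refine hdual (Submodule.mem_div_iff_forall_mul_mem.mpr fun w hw => ?_)
      exact hstep2 y₁ hy₁ y₂ hy₂ w (hJ₀le hw)
    refine ⟨N + 1, fun y hy => ?_⟩
    have hy' : y ∈ I ^ (N + 1) * I := by rwa [← pow_succ]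
    have : x * algebraMap R K y ∈ (1 : Submodule R K) := by
      refine Submodule.mul_induction_on hy' (fun y₁ hy₁ y₂ hy₂ => ?_) (fun w₁ w₂ ih₁ ih₂ => ?_)
      · rw [map_mul, ← mul_assoc]
        exact hstep3 y₁ hy₁ y₂ hy₂
      · rw [map_add, mul_add]; exact Submodule.add_mem _ ih₁ ih₂
    obtain ⟨r, hr⟩ := Submodule.mem_one.mp this
    exact ⟨r, hr.symm⟩
  -- wrap up
  have hext_le : extendI I T ≤ (1 : Submodule T K) := by
    refine Submodule.span_le.mpr ?_
    rintro x ⟨r, hr, rfl⟩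
    rw [SetLike.mem_coe, aux_mem_one_subalgebra]
    exact T.algebraMap_mem r
  refine le_antisymm ?_ ?_
  · refine sSup_le ?_
    rintro V ⟨J'', _, _, hle, rfl⟩
    exact aux_vOp_le_one (hle.trans hext_le)
  · have hmem : vOp (Submodule.span T (SF : Set K)) ∈
        {V | ∃ J : Submodule T K, J ≠ ⊥ ∧ J.FG ∧ J ≤ extendI I T ∧ V = vOp J} := by
      refine ⟨Submodule.span T (SF : Set K), ?_, Submodule.fg_span SF.finite_toSet, ?_, rfl⟩
      · intro h
        have : algebraMap R K a ∈ (⊥ : Submodule T K) :=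
          h ▸ Submodule.subset_span (Finset.mem_insert_self _ _)
        exact hamap ((Submodule.mem_bot T).mp this)
      · refine Submodule.span_le.mpr fun z hz => ?_
        exact Submodule.subset_span (hSFsub hz)
    exact le_trans (aux_one_le_vOp key) (le_sSup hmem)

end Statements

end

end PVMDPaper
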